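/- Let H(x) = -x log₂(x) - (1-x) log₂(1-x) denote the binary entropy function, and let log denote the natural logarithm. For every x ∈ (0, 1/100), H(1-x) + 2(1-x) log(1/x) ≤ 2 log(1/x). -/

import Mathlib

/-- The binary entropy function `H(x) = -x log₂ x - (1-x) log₂ (1-x)`. -/
noncomputable def binH (x : ℝ) : ℝ := -(x * Real.logb 2 x) - (1 - x) * Real.logb 2 (1 - x)

/-- For every `x ∈ (0, 1/100)`, `H(1-x) + 2(1-x) log(1/x) ≤ 2 log(1/x)`
(natural logarithm). -/
theorem entropy_endpoint_bound (x : ℝ) (hx : x ∈ Set.Ioo (0:ℝ) (1/100)) :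
    binH (1 - x) + 2 * (1 - x) * Real.log (1 / x) ≤ 2 * Real.log (1 / x) := by
  obtain ⟨hx0, hx1⟩ := hx
  have h1x : 0 < 1 - x := by linarith
  have hc : (0:ℝ) < Real.log 2 := Real.log_pos (by norm_num)
  have hlog2 : Real.log 2 > 0.6931 := by
    have := Real.log_two_gt_d9; linarith
  -- log(1/x) = -log x
  have hLb : Real.log (1/x) = -Real.log x := by
    rw [one_div, Real.log_inv]
  -- L ≥ 6 log 2
  have h64 : (2:ℝ)^6 ≤ 1/x := by
    rw [le_div_iff₀ hx0]; nlinarith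
  have hL : 6 * Real.log 2 ≤ Real.log (1/x) := by
    calc 6 * Real.log 2 = Real.log ((2:ℝ)^6) := by
          rw [Real.log_pow]; push_cast; ring
      _ ≤ Real.log (1/x) := Real.log_le_log (by positivity) h64
  -- key step A : -(1-x) log (1-x) ≤ x
  have hA : -((1 - x) * Real.log (1 - x)) ≤ x := by
    have h := Real.log_le_sub_one_of_pos (x := (1 - x)⁻¹) (by positivity)
    rw [Real.log_inv] at h
    have h' : -Real.log (1 - x) ≤ (1 - x)⁻¹ - 1 := h
    have := mul_le_mul_of_nonneg_left h' h1x.le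
    have hinv : (1 - x) * ((1 - x)⁻¹ - 1) = x := by
      field_simp
      ring
    nlinarith
  -- unfold
  rw [binH, Real.logb, Real.logb, sub_sub_cancel, hLb]
  rw [div_eq_mul_inv, div_eq_mul_inv]
  set a := Real.log (1 - x) with ha
  set b := Real.log x with hb
  set c := Real.log 2 with hcdef
  rw [hLb] at hL
  -- goal: -((1-x)*(a*c⁻¹)) - x*(b*c⁻¹) + 2*(1-x)*(-b) ≤ 2*(-b)
  have hcinv : c * c⁻¹ = 1 := mul_inv_cancel₀ hc.ne'
  have key : -((1 - x) * a) - x * b ≤ -(2 * c * x * b) := by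
    nlinarith [mul_nonneg hx0.le (sub_nonneg.mpr hL), mul_pos hx0 hc,
      mul_le_mul_of_nonneg_left hL hx0.le]
  calc -((1 - x) * (a * c⁻¹)) - x * (b * c⁻¹) + 2 * (1 - x) * (-b)
      = (-((1 - x) * a) - x * b) * c⁻¹ + 2 * (1 - x) * (-b) := by ring
    _ ≤ (-(2 * c * x * b)) * c⁻¹ + 2 * (1 - x) * (-b) := by
        have : (0:ℝ) < c⁻¹ := by positivity
        nlinarith [key]
    _ = 2 * (-b) := by
        field_simp
        ring
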